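/- Call a natural transformation η : F ⟶ G between functors from commutative rings to sets locally of finite presentation if for every filtered category J and every functor R : J ⥤ CommRing, the canonical map colim_j F(R_j) → F(colim_j R_j) ×_{G(colim_j R_j)} colim_j G(R_j), induced by the colimit comparison maps, is a bijection. Let F, G, H : CommRing ⥤ Set be functors, η : F ⟶ G a natural transformation that is locally of finite presentation, and θ : H ⟶ G an arbitrary natural transformation. Let F ×_G H be the pointwise fiber product functor, (F ×_G H)(R) = {(x,y) ∈ F(R) × H(R) : η_R(x) = θ_R(y)}. Then the second projection F ×_G H ⟶ H is locally of finite presentation. -/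

import Mathlib

open CategoryTheory CategoryTheory.Limits

universe u

namespace LFP

/-- The canonical comparison map `colim_j F(R_j) → F(colim_j R_j)`. -/
noncomputable def colimitComparison (F : CommRingCat.{u} ⥤ Type u) {J : Type u}
    [SmallCategory J] [IsFiltered J] (R : J ⥤ CommRingCat.{u}) :
    colimit (R ⋙ F) ⟶ F.obj (colimit R) :=
  colimit.desc (R ⋙ F) (F.mapCocone (colimit.cocone R))

/-- The canonical map `colim_j F(R_j) → F(colim R) ×_{G(colim R)} colim_j G(R_j)` induced by
the colimit comparison maps and a natural transformation `η : F ⟶ G`. -/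
noncomputable def comparisonToFiberProduct {F G : CommRingCat.{u} ⥤ Type u} (η : F ⟶ G)
    {J : Type u} [SmallCategory J] [IsFiltered J] (R : J ⥤ CommRingCat.{u}) :
    colimit (R ⋙ F) →
      { p : F.obj (colimit R) × colimit (R ⋙ G) //
          η.app (colimit R) p.1 = colimitComparison G R p.2 } :=
  fun x =>
    ⟨(colimitComparison F R x, colimMap (Functor.whiskerLeft R η) x), by
      have h : colimitComparison F R ≫ η.app (colimit R)
          = colimMap (Functor.whiskerLeft R η) ≫ colimitComparison G R := by
        apply colimit.hom_ext
        intro j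
        simp only [colimitComparison, colimit.ι_desc_assoc, Functor.mapCocone_ι_app,
          Functor.comp_obj, colimit.cocone_ι, ι_colimMap_assoc, Functor.whiskerLeft_app,
          colimit.ι_desc]
        exact η.naturality (colimit.ι R j)
      simpa only [types_comp_apply] using types_congr_hom h x⟩

/-- A natural transformation `η : F ⟶ G` of set-valued functors on commutative rings is
*locally of finite presentation* if for every filtered category `J` and every functor
`R : J ⥤ CommRing`, the canonical map
`colim_j F(R_j) → F(colim R) ×_{G(colim R)} colim_j G(R_j)` is a bijection. -/
def IsLocallyFinitelyPresented {F G : CommRingCat.{u} ⥤ Type u} (η : F ⟶ G) : Prop :=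
  ∀ (J : Type u) (_ : SmallCategory J) (_ : IsFiltered J) (R : J ⥤ CommRingCat.{u}),
    Function.Bijective (comparisonToFiberProduct η R)

/-- The pointwise fiber product functor `F ×_G H` of `η : F ⟶ G` and `θ : H ⟶ G`. -/
def fiberProductFunctor {F G H : CommRingCat.{u} ⥤ Type u} (η : F ⟶ G) (θ : H ⟶ G) :
    CommRingCat.{u} ⥤ Type u where
  obj R := { p : F.obj R × H.obj R // η.app R p.1 = θ.app R p.2 }
  map {R S} f := TypeCat.ofHom fun p =>
    ⟨(F.map f p.val.1, H.map f p.val.2), by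
      have h1 := types_congr_hom (η.naturality f) p.val.1
      have h2 := types_congr_hom (θ.naturality f) p.val.2
      simp only [types_comp_apply] at h1 h2
      rw [h1, h2, p.property]⟩
  map_id R := by
    refine ConcreteCategory.hom_ext _ _ fun p => ?_
    apply Subtype.ext
    simp
  map_comp {R S T} f g := by
    refine ConcreteCategory.hom_ext _ _ fun p => ?_
    apply Subtype.ext
    simp

/-- The second projection `F ×_G H ⟶ H`. -/
def fiberProductSnd {F G H : CommRingCat.{u} ⥤ Type u} (η : F ⟶ G) (θ : H ⟶ G) :
    fiberProductFunctor η θ ⟶ H where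
  app R := TypeCat.ofHom fun p => p.val.2
  naturality R S f := rfl

end LFP

open LFP
section Aux
open CategoryTheory CategoryTheory.Limits
namespace LFP

variable {J : Type u} [SmallCategory J] [IsFiltered J] (R : J ⥤ CommRingCat.{u})

lemma colimitComparison_ι (F : CommRingCat.{u} ⥤ Type u) (j : J) (x : (R ⋙ F).obj j) :
    colimitComparison F R (colimit.ι (R ⋙ F) j x) = F.map (colimit.ι R j) x :=
  types_congr_hom (colimit.ι_desc (F.mapCocone (colimit.cocone R)) j) x

lemma colimMap_ι {F G : CommRingCat.{u} ⥤ Type u} (η : F ⟶ G) (j : J) (x : (R ⋙ F).obj j) :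
    colimMap (Functor.whiskerLeft R η) (colimit.ι (R ⋙ F) j x)
      = colimit.ι (R ⋙ G) j (η.app (R.obj j) x) :=
  types_congr_hom (ι_colimMap (Functor.whiskerLeft R η) j) x

lemma w_apply {K : J ⥤ Type u} {j j' : J} (f : j ⟶ j') (x : K.obj j) :
    colimit.ι K j' (K.map f x) = colimit.ι K j x := types_congr_hom (colimit.w K f) x

lemma exists_single_map_eq {K : J ⥤ Type u} {j : J} {u v : K.obj j}
    (h : colimit.ι K j u = colimit.ι K j v) :
    ∃ (k : J) (e : j ⟶ k), K.map e u = K.map e v := by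
  obtain ⟨k, f, g, hfg⟩ := (Types.FilteredColimit.colimit_eq_iff K).mp h
  refine ⟨IsFiltered.coeq f g, f ≫ IsFiltered.coeqHom f g, ?_⟩
  conv_rhs => rw [IsFiltered.coeq_condition f g]
  simp [FunctorToTypes.map_comp_apply, hfg]

end LFP
end Aux


/-- If `η : F ⟶ G` is locally of finite presentation and `θ : H ⟶ G` is
arbitrary, then the second projection `F ×_G H ⟶ H` of the pointwise fiber product functor
is locally of finite presentation. -/
theorem isLocallyFinitelyPresented_fiberProductSnd
    {F G H : CommRingCat.{u} ⥤ Type u} (η : F ⟶ G) (θ : H ⟶ G)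
    (hη : IsLocallyFinitelyPresented η) :
    IsLocallyFinitelyPresented (fiberProductSnd η θ) := by
  intro J hSC hFil R
  letI := hSC; letI := hFil
  constructor
  · -- injectivity
    have key : ∀ (m : J) (p q : (R ⋙ fiberProductFunctor η θ).obj m),
        comparisonToFiberProduct (fiberProductSnd η θ) R
            (colimit.ι (R ⋙ fiberProductFunctor η θ) m p)
          = comparisonToFiberProduct (fiberProductSnd η θ) R
            (colimit.ι (R ⋙ fiberProductFunctor η θ) m q) →
        colimit.ι (R ⋙ fiberProductFunctor η θ) m p
          = colimit.ι (R ⋙ fiberProductFunctor η θ) m q := ?_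
    · intro a b hab
      obtain ⟨j₁, p₁, rfl⟩ := Types.jointly_surjective' a
      obtain ⟨j₂, p₂, rfl⟩ := Types.jointly_surjective' b
      rw [← w_apply (K := R ⋙ fiberProductFunctor η θ) (IsFiltered.leftToMax j₁ j₂) p₁,
        ← w_apply (K := R ⋙ fiberProductFunctor η θ) (IsFiltered.rightToMax j₁ j₂) p₂] at hab ⊢
      exact key _ _ _ hab
    intro m p q hab
    have hval := congrArg Subtype.val hab
    have h1 : colimitComparison (fiberProductFunctor η θ) R
        (colimit.ι (R ⋙ fiberProductFunctor η θ) m p)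
        = colimitComparison (fiberProductFunctor η θ) R
          (colimit.ι (R ⋙ fiberProductFunctor η θ) m q) := congrArg Prod.fst hval
    have h2 : colimMap (Functor.whiskerLeft R (fiberProductSnd η θ))
        (colimit.ι (R ⋙ fiberProductFunctor η θ) m p)
        = colimMap (Functor.whiskerLeft R (fiberProductSnd η θ))
          (colimit.ι (R ⋙ fiberProductFunctor η θ) m q) := congrArg Prod.snd hval
    rw [colimitComparison_ι, colimitComparison_ι] at h1
    rw [colimMap_ι, colimMap_ι] at h2
    have h1F : F.map (colimit.ι R m) p.val.1 = F.map (colimit.ι R m) q.val.1 :=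
      congrArg (fun t => t.val.1) h1
    have h2H : colimit.ι (R ⋙ H) m p.val.2 = colimit.ι (R ⋙ H) m q.val.2 := h2
    -- deduce equality of F-components in the colimit using hη
    have hF : colimit.ι (R ⋙ F) m p.val.1 = colimit.ι (R ⋙ F) m q.val.1 := by
      apply (hη J hSC hFil R).1
      apply Subtype.ext
      refine Prod.ext ?_ ?_
      · show colimitComparison F R (colimit.ι (R ⋙ F) m p.val.1)
            = colimitComparison F R (colimit.ι (R ⋙ F) m q.val.1)
        rw [colimitComparison_ι, colimitComparison_ι]; exact h1F
      · show colimMap (Functor.whiskerLeft R η) _ = colimMap (Functor.whiskerLeft R η) _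
        rw [colimMap_ι, colimMap_ι, p.property, q.property]
        have := congrArg (colimMap (Functor.whiskerLeft R θ)) h2H
        rwa [colimMap_ι, colimMap_ι] at this
    obtain ⟨k₁, e₁, hE1⟩ := exists_single_map_eq hF
    obtain ⟨k₂, e₂, hE2⟩ := exists_single_map_eq h2H
    set d := IsFiltered.coeqHom (e₁ ≫ IsFiltered.leftToMax k₁ k₂)
      (e₂ ≫ IsFiltered.rightToMax k₁ k₂) with hd
    set c := (e₁ ≫ IsFiltered.leftToMax k₁ k₂) ≫ d with hc
    have hc1 : c = e₁ ≫ (IsFiltered.leftToMax k₁ k₂ ≫ d) := by rw [hc, Category.assoc]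
    have hc2 : c = e₂ ≫ (IsFiltered.rightToMax k₁ k₂ ≫ d) := by
      rw [hc, IsFiltered.coeq_condition, Category.assoc]
    rw [← w_apply (K := R ⋙ fiberProductFunctor η θ) c p, ← w_apply (K := R ⋙ fiberProductFunctor η θ) c q]
    apply congrArg
    apply Subtype.ext
    refine Prod.ext ?_ ?_
    · show F.map (R.map c) p.val.1 = F.map (R.map c) q.val.1
      rw [hc1, R.map_comp, FunctorToTypes.map_comp_apply, FunctorToTypes.map_comp_apply]
      exact congrArg (F.map (R.map _)) hE1
    · show H.map (R.map c) p.val.2 = H.map (R.map c) q.val.2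
      rw [hc2, R.map_comp, FunctorToTypes.map_comp_apply, FunctorToTypes.map_comp_apply]
      exact congrArg (H.map (R.map _)) hE2
  · -- surjectivity
    rintro ⟨⟨pab, z⟩, hz⟩
    change { p : F.obj (colimit R) × H.obj (colimit R) // η.app _ p.1 = θ.app _ p.2 } at pab
    obtain ⟨j, y, rfl⟩ := Types.jointly_surjective' z
    have hz' : pab.val.2 = H.map (colimit.ι R j) y := by
      rw [← colimitComparison_ι]; exact hz
    have hprop : η.app (colimit R) pab.val.1
        = colimitComparison G R (colimit.ι (R ⋙ G) j (θ.app (R.obj j) y)) := by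
      rw [colimitComparison_ι, pab.property, hz']
      exact FunctorToTypes.naturality θ (colimit.ι R j) y
    obtain ⟨x, hx⟩ := (hη J hSC hFil R).2 ⟨(pab.val.1, colimit.ι (R ⋙ G) j (θ.app _ y)), hprop⟩
    have hx1 : colimitComparison F R x = pab.val.1 :=
      congrArg (fun t => t.val.1) hx
    have hx2 : colimMap (Functor.whiskerLeft R η) x = colimit.ι (R ⋙ G) j (θ.app _ y) :=
      congrArg (fun t => t.val.2) hx
    obtain ⟨j', x', rfl⟩ := Types.jointly_surjective' x
    rw [colimMap_ι] at hx2
    obtain ⟨k, f, g, hfg⟩ := (Types.FilteredColimit.colimit_eq_iff (R ⋙ G)).mp hx2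
    have hpk : η.app (R.obj k) (F.map (R.map f) x') = θ.app (R.obj k) (H.map (R.map g) y) := by
      have l1 := FunctorToTypes.naturality η (R.map f) x'
      have l2 := FunctorToTypes.naturality θ (R.map g) y
      rw [l1, l2]; exact hfg
    refine ⟨colimit.ι (R ⋙ fiberProductFunctor η θ) k
      (⟨(F.map (R.map f) x', H.map (R.map g) y), hpk⟩ : (R ⋙ fiberProductFunctor η θ).obj k), ?_⟩
    apply Subtype.ext
    refine Prod.ext ?_ ?_
    · show colimitComparison (fiberProductFunctor η θ) R _ = pab
      refine (colimitComparison_ι R _ k _).trans ?_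
      apply Subtype.ext
      refine Prod.ext ?_ ?_
      · show F.map (colimit.ι R k) (F.map (R.map f) x') = pab.val.1
        rw [← FunctorToTypes.map_comp_apply, colimit.w R f, ← colimitComparison_ι]
        exact hx1
      · show H.map (colimit.ι R k) (H.map (R.map g) y) = pab.val.2
        rw [← FunctorToTypes.map_comp_apply, colimit.w R g]
        exact hz'.symm
    · show colimMap (Functor.whiskerLeft R (fiberProductSnd η θ)) _ = colimit.ι (R ⋙ H) j y
      refine (colimMap_ι R _ k _).trans ?_
      exact w_apply (K := R ⋙ H) g y
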